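/- Let 𝒫 be a nice Roman domination property, G=(V,E) a finite simple graph and f : V → {0,1,2} a function with N(V_1(f)) ∩ V_2(f) = ∅. Then there exists a minimal function h : V → {0,1,2} with property 𝒫 on G satisfying f ≤ h if and only if C_{𝒫,G}[V_2(f)] ≠ ∅. -/

import Mathlib

open Set

variable {V : Type*}

/-- The set of vertices on which `f` takes value `i`. -/
def Vlevel (f : V → ℕ) (i : ℕ) : Set V := {v | f v = i}

/-- Closed neighborhood of `v` inside the induced subgraph `G[W]`. -/
def closedNbhdIn (G : SimpleGraph V) (W : Set V) (v : V) : Set V :=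
  {u ∈ W | u = v ∨ G.Adj u v}

/-- Closed neighborhood of a set `A` inside the induced subgraph `G[W]`. -/
def closedNbhdSetIn (G : SimpleGraph V) (W A : Set V) : Set V :=
  ⋃ u ∈ A, closedNbhdIn G W u

/-- Private neighborhood `P_{G[W],A}(v) = N[v] \ N[A \ {v}]` inside `G[W]`. -/
def privNbhd (G : SimpleGraph V) (W A : Set V) (v : V) : Set V :=
  closedNbhdIn G W v \ closedNbhdSetIn G W (A \ {v})

/-- Closed neighborhood `N[v]` in `G`. -/
def closedNbhd (G : SimpleGraph V) (v : V) : Set V := {u | u = v ∨ G.Adj u v}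

/-- Closed neighborhood `N[A]` of a set in `G`. -/
def closedNbhdSet (G : SimpleGraph V) (A : Set V) : Set V := ⋃ v ∈ A, closedNbhd G v

/-- Open neighborhood `N(A)` of a set in `G`. -/
def openNbhdSet (G : SimpleGraph V) (A : Set V) : Set V := ⋃ v ∈ A, G.neighborSet v

/-- Characteristic function of a set. -/
noncomputable def chi (S : Set V) : V → ℕ := S.indicator 1

/-- Roman dominating function: values in {0,1,2}, and every vertex of value 0 has
a neighbor of value 2. -/
def IsRDF (G : SimpleGraph V) (f : V → ℕ) : Prop :=
  (∀ v, f v ≤ 2) ∧ ∀ v, f v = 0 → ∃ u, G.Adj v u ∧ f u = 2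

/-- `f` is minimal with respect to the pointwise order among functions with property `P`. -/
def MinimalWrt (P : (V → ℕ) → Prop) (f : V → ℕ) : Prop :=
  P f ∧ ∀ g, P g → g ≤ f → g = f

/-- `C_{P,G}[A]`: minimal functions with property `P` whose set of vertices of value 2 is `A`. -/
def CSet (P : (V → ℕ) → Prop) (A : Set V) : Set (V → ℕ) :=
  {f | MinimalWrt P f ∧ Vlevel f 2 = A}

/-- Nice Roman domination property. -/
def IsNiceRDP (G : SimpleGraph V) (P : (V → ℕ) → Prop) : Prop :=
  (∀ f, P f → IsRDF G f) ∧
  (∀ f, P f → ∀ v ∈ Vlevel f 0, P (f + chi {v})) ∧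
  (∀ f, P f → ∀ v ∈ Vlevel f 2,
    (P (f - chi {v}) ↔ privNbhd G (Vlevel f 0 ∪ Vlevel f 2) (Vlevel f 2) v ⊆ {v}))

/-- Maximal Roman dominating function: an Rdf such that `V_0(f)` is not a dominating set. -/
def IsMRDF (G : SimpleGraph V) (f : V → ℕ) : Prop :=
  IsRDF G f ∧ closedNbhdSet G (Vlevel f 0) ≠ Set.univ

/-- Total Roman dominating function: an Rdf such that `G[V_1(f) ∪ V_2(f)]` has no isolated
vertices. -/
def IsTRDF (G : SimpleGraph V) (f : V → ℕ) : Prop :=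
  IsRDF G f ∧ ∀ v ∈ Vlevel f 1 ∪ Vlevel f 2, ∃ u ∈ Vlevel f 1 ∪ Vlevel f 2, G.Adj v u

/-- Connected Roman dominating function: an Rdf such that `G[V_1(f) ∪ V_2(f)]` is connected. -/
def IsCRDF (G : SimpleGraph V) (f : V → ℕ) : Prop :=
  IsRDF G f ∧ (G.induce (Vlevel f 1 ∪ Vlevel f 2)).Connected

section AuxLemmas

variable {G : SimpleGraph V} {P : (V → ℕ) → Prop}


variable {G : SimpleGraph V} {P : (V → ℕ) → Prop}

lemma mem_Vlevel {f : V → ℕ} {i : ℕ} {v : V} : v ∈ Vlevel f i ↔ f v = i := Iff.rfl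

lemma chi_of_mem {S : Set V} {v : V} (h : v ∈ S) : chi S v = 1 := by
  simp [chi, Set.indicator_of_mem h]

lemma chi_of_not_mem {S : Set V} {v : V} (h : v ∉ S) : chi S v = 0 := by
  simp [chi, Set.indicator_of_notMem h]

lemma mem_cnsi {W A : Set V} {u w : V} (hw : w ∈ A) (huW : u ∈ W)
    (h : u = w ∨ G.Adj u w) : u ∈ closedNbhdSetIn G W A :=
  mem_iUnion₂.mpr ⟨w, hw, ⟨huW, h⟩⟩

lemma add_chi_set (hP : IsNiceRDP G P) {g : V → ℕ} (hg : P g) {S : Set V}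
    (hfin : S.Finite) (hS : S ⊆ Vlevel g 0) : P (g + chi S) := by
  revert hS
  refine Set.Finite.induction_on (motive := fun S _ => S ⊆ Vlevel g 0 → P (g + chi S)) S hfin ?_ ?_
  · intro _
    have : chi (∅ : Set V) = 0 := by funext u; simp [chi]
    simpa [this] using hg
  · intro a s ha hsfin ih hsub
    have has : g a = 0 := hsub (mem_insert a s)
    have hgs : P (g + chi s) := ih ((subset_insert a s).trans hsub)
    have hmem : a ∈ Vlevel (g + chi s) 0 := by
      show g a + chi s a = 0
      rw [chi_of_not_mem ha, has]
    have key : g + chi (insert a s) = (g + chi s) + chi {a} := by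
      funext u
      by_cases hu : u = a
      · subst hu
        simp [Pi.add_apply, chi_of_mem (mem_insert _ _), chi_of_not_mem ha,
          chi_of_mem (mem_singleton u)]
      · have hu' : u ∉ ({a} : Set V) := by simpa using hu
        by_cases hus : u ∈ s
        · simp [Pi.add_apply, chi_of_mem (mem_insert_of_mem _ hus), chi_of_mem hus,
            chi_of_not_mem hu']
        · have hins : u ∉ insert a s := by simp [hu, hus]
          simp [Pi.add_apply, chi_of_not_mem hins, chi_of_not_mem hus, chi_of_not_mem hu']
    rw [key]
    exact hP.2.1 _ hgs a hmem

lemma lemA [Fintype V] (hP : IsNiceRDP G P) {h g : V → ℕ} (hh : P h) (hg : P g) (hgh : g ≤ h)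
    {v : V} (hv2 : h v = 2) (hlt : g v < 2) :
    privNbhd G (Vlevel h 0 ∪ Vlevel h 2) (Vlevel h 2) v ⊆ {v} := by
  set W := Vlevel h 0 ∪ Vlevel h 2 with hW
  set S : Set V := {u | g u = 0 ∧ 1 ≤ h u} with hSdef
  have hS : S ⊆ Vlevel g 0 := fun u hu => hu.1
  have hgS : P (g + chi S) := add_chi_set hP hg (Set.toFinite S) hS
  rintro u ⟨⟨huW, hc⟩, hnot⟩
  rcases hc with rfl | hadj
  · exact mem_singleton _
  · exfalso
    rcases huW with hu0 | hu2
    · have hu0' : h u = 0 := hu0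
      have hgu : g u = 0 := Nat.le_zero.mp (hu0' ▸ hgh u)
      have huS : u ∉ S := fun hs => by have := hs.2; omega
      have hval : (g + chi S) u = 0 := by
        simp [Pi.add_apply, hgu, chi_of_not_mem huS]
      obtain ⟨w, hadjw, hw2⟩ := (hP.1 _ hgS).2 u hval
      have hwS : w ∉ S := by
        intro hs
        rw [Pi.add_apply, hs.1, chi_of_mem hs] at hw2
        omega
      have hgw : g w = 2 := by
        rw [Pi.add_apply, chi_of_not_mem hwS] at hw2
        omega
      have hhw : h w = 2 := le_antisymm ((hP.1 h hh).1 w) (hgw ▸ hgh w)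
      have hwv : w ≠ v := by
        intro e
        rw [e] at hgw
        omega
      exact hnot (mem_cnsi ⟨hhw, hwv⟩ (Or.inl hu0) (Or.inr hadjw))
    · exact hnot (mem_cnsi ⟨hu2, hadj.ne⟩ (Or.inr hu2) (Or.inl rfl))

lemma step [Fintype V] (hP : IsNiceRDP G P) {h : V → ℕ} (hh : P h) {v : V} (hv : h v = 2) :
    ∃ h₁ : V → ℕ, P h₁ ∧ Vlevel h₁ 2 = Vlevel h 2 \ {v} ∧
      ∀ w ∈ Vlevel h 2, w ≠ v →
        ¬ privNbhd G (Vlevel h 0 ∪ Vlevel h 2) (Vlevel h 2) w ⊆ {w} →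
        ¬ privNbhd G (Vlevel h₁ 0 ∪ Vlevel h₁ 2) (Vlevel h₁ 2) w ⊆ {w} := by
  set W := Vlevel h 0 ∪ Vlevel h 2 with hWdef
  set T := privNbhd G W (Vlevel h 2) v \ {v} with hTdef
  have hT0 : T ⊆ Vlevel h 0 := by
    rintro u ⟨⟨⟨huW, hc⟩, hnot⟩, hne⟩
    rcases huW with h0 | h2
    · exact h0
    · exact absurd (mem_cnsi (A := Vlevel h 2 \ {v}) ⟨h2, hne⟩ (Or.inr h2) (Or.inl rfl)) hnot
  have hvT : v ∉ T := fun hv' => hv'.2 rfl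
  set g := h + chi T with hgdef
  have hg : P g := add_chi_set hP hh (Set.toFinite T) hT0
  have hgv : g v = 2 := by simp [hgdef, Pi.add_apply, hv, chi_of_not_mem hvT]
  have hgval : ∀ u, u ∉ T → g u = h u := fun u hu => by
    simp [hgdef, Pi.add_apply, chi_of_not_mem hu]
  have hV2g : Vlevel g 2 = Vlevel h 2 := by
    ext u
    by_cases huT : u ∈ T
    · have h0 : h u = 0 := hT0 huT
      simp [mem_Vlevel, hgdef, Pi.add_apply, chi_of_mem huT, h0]
    · simp [mem_Vlevel, hgval u huT]
  have hV0g : Vlevel g 0 = Vlevel h 0 \ T := by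
    ext u
    by_cases huT : u ∈ T
    · have h0 : h u = 0 := hT0 huT
      simp [mem_Vlevel, hgdef, Pi.add_apply, chi_of_mem huT, h0, huT]
    · simp [mem_Vlevel, hgval u huT, huT]
  have hpriv : privNbhd G (Vlevel g 0 ∪ Vlevel g 2) (Vlevel g 2) v ⊆ {v} := by
    rintro u ⟨⟨huW, hc⟩, hnot⟩
    rcases hc with rfl | hadj
    · exact mem_singleton _
    · exfalso
      rcases huW with hu0 | hu2
      · have hu0' : u ∈ Vlevel h 0 \ T := hV0g ▸ hu0
        apply hu0'.2
        refine ⟨⟨⟨Or.inl hu0'.1, Or.inr hadj⟩, ?_⟩, fun e => hadj.ne e⟩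
        intro hmem
        obtain ⟨w, hwmem, hwc⟩ := mem_iUnion₂.mp hmem
        exact hnot (mem_cnsi (show w ∈ Vlevel g 2 \ {v} from hV2g ▸ hwmem)
          (Or.inl hu0) hwc.2)
      · exact hnot (mem_cnsi ⟨hu2, hadj.ne⟩ (Or.inr hu2) (Or.inl rfl))
  have hv2g : v ∈ Vlevel g 2 := hgv
  have hPh1 : P (g - chi {v}) := (hP.2.2 g hg v hv2g).mpr hpriv
  set h₁ := g - chi {v} with h1def
  have h₁v : h₁ v = 1 := by
    simp [h1def, Pi.sub_apply, hgv, chi_of_mem (mem_singleton v)]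
  have h₁ne : ∀ u, u ≠ v → h₁ u = g u := fun u hu => by
    have : u ∉ ({v} : Set V) := by simpa using hu
    simp [h1def, Pi.sub_apply, chi_of_not_mem this]
  have hV2h₁ : Vlevel h₁ 2 = Vlevel h 2 \ {v} := by
    ext u
    by_cases hu : u = v
    · subst hu
      simp [mem_Vlevel, h₁v]
    · rw [mem_Vlevel, h₁ne u hu, ← mem_Vlevel, hV2g]
      simp [hu]
  have hV0h₁ : Vlevel h₁ 0 = Vlevel h 0 \ T := by
    ext u
    by_cases hu : u = v
    · subst hu
      simp [mem_Vlevel, h₁v, hv]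
    · rw [mem_Vlevel, h₁ne u hu, ← mem_Vlevel, hV0g]
  refine ⟨h₁, hPh1, hV2h₁, ?_⟩
  intro w hw2 hwv hwit
  rw [Set.not_subset] at hwit ⊢
  obtain ⟨u, hu, hune⟩ := hwit
  have hune' : u ≠ w := fun e => hune (by simp [e])
  obtain ⟨⟨huW, hc⟩, hnotw⟩ := hu
  have hadj : G.Adj u w := hc.resolve_left hune'
  have hu0 : u ∈ Vlevel h 0 := by
    rcases huW with h0 | h2
    · exact h0
    · exact absurd (mem_cnsi (A := Vlevel h 2 \ {w}) ⟨h2, hune'⟩ (Or.inr h2) (Or.inl rfl)) hnotw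
  have huT : u ∉ T := by
    intro hT
    exact hT.1.2 (mem_cnsi ⟨hw2, hwv⟩ huW (Or.inr hadj))
  have huv : u ≠ v := by
    intro e
    have h0 : h u = 0 := hu0
    rw [e, hv] at h0
    omega
  have hu01 : u ∈ Vlevel h₁ 0 := hV0h₁ ▸ ⟨hu0, huT⟩
  refine ⟨u, ⟨⟨Or.inl hu01, Or.inr hadj⟩, ?_⟩, by simpa using hune'⟩
  intro hmem
  obtain ⟨x, hx, hux⟩ := mem_iUnion₂.mp hmem
  have hx1 : x ∈ Vlevel h₁ 2 \ ({w} : Set V) := hx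
  have hx' : x ∈ Vlevel h 2 \ {w} := ⟨(hV2h₁ ▸ hx1.1 : x ∈ Vlevel h 2 \ {v}).1, hx1.2⟩
  exact hnotw (mem_cnsi hx' huW hux.2)

lemma exists_min [Fintype V] (hP : IsNiceRDP G P) {h : V → ℕ} (hh : P h) :
    ∃ g, MinimalWrt P g ∧ g ≤ h := by
  classical
  set S : Set (V → ℕ) := {g | P g ∧ g ≤ h} with hSdef
  have hfin : S.Finite := by
    have hsub : S ⊆ Set.Icc 0 h := fun g hg => ⟨fun v => Nat.zero_le _, hg.2⟩
    exact (Set.finite_Icc 0 h).subset hsub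
  obtain ⟨g, hgS, hmin⟩ := Set.Finite.exists_minimalFor id S hfin ⟨h, hh, le_refl h⟩
  exact ⟨g, ⟨hgS.1, fun k hk hkg => le_antisymm hkg (hmin ⟨hk, hkg.trans hgS.2⟩ hkg)⟩, hgS.2⟩

lemma terminal [Fintype V] (hP : IsNiceRDP G P) {h : V → ℕ} (hh : P h)
    (hinv : ∀ w ∈ Vlevel h 2,
      ¬ privNbhd G (Vlevel h 0 ∪ Vlevel h 2) (Vlevel h 2) w ⊆ {w}) :
    (CSet P (Vlevel h 2)).Nonempty := by
  obtain ⟨g, hgmin, hgle⟩ := exists_min hP hh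
  refine ⟨g, hgmin, ?_⟩
  apply subset_antisymm
  · intro v hv
    have hgv : g v = 2 := hv
    have hle : g v ≤ h v := hgle v
    have h2 : h v ≤ 2 := (hP.1 h hh).1 v
    show h v = 2
    omega
  · intro v hv
    have hv2 : h v = 2 := hv
    by_contra hne
    have hne2 : g v ≠ 2 := hne
    have hlt : g v < 2 := by
      have hle : g v ≤ h v := hgle v
      have h2 : h v ≤ 2 := (hP.1 h hh).1 v
      omega
    exact hinv v hv (lemA hP hh hgmin.1 hgle hv2 hlt)

lemma main_aux [Fintype V] (hP : IsNiceRDP G P) (A : Set V) :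
    ∀ n (h : V → ℕ), P h → A ⊆ Vlevel h 2 →
      (∀ w ∈ A, ¬ privNbhd G (Vlevel h 0 ∪ Vlevel h 2) (Vlevel h 2) w ⊆ {w}) →
      (Vlevel h 2).ncard ≤ n → (CSet P A).Nonempty := by
  intro n
  induction n with
  | zero =>
    intro h hh hA hinv hcard
    have hV2 : Vlevel h 2 = ∅ :=
      Set.ncard_eq_zero (Set.toFinite _) |>.mp (Nat.le_zero.mp hcard)
    have hAe : Vlevel h 2 = A := by
      rw [hV2]
      exact (Set.subset_empty_iff.mp (hV2 ▸ hA)).symm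
    exact hAe ▸ terminal hP hh (fun w hw => hinv w (hAe ▸ hw))
  | succ n ih =>
    intro h hh hA hinv hcard
    by_cases hEq : Vlevel h 2 = A
    · exact hEq ▸ terminal hP hh (fun w hw => hinv w (hEq ▸ hw))
    · have hss : A ⊂ Vlevel h 2 := ⟨hA, fun hsub => hEq (subset_antisymm hsub hA)⟩
      obtain ⟨v, hv2, hvA⟩ := Set.exists_of_ssubset hss
      obtain ⟨h₁, hPh1, hV2h₁, htrans⟩ := step hP hh (show h v = 2 from hv2)
      refine ih h₁ hPh1 ?_ ?_ ?_
      · intro w hw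
        rw [hV2h₁]
        exact ⟨hA hw, fun e => hvA ((mem_singleton_iff.mp e) ▸ hw)⟩
      · intro w hw
        exact htrans w (hA hw) (fun e => hvA (e ▸ hw)) (hinv w hw)
      · rw [hV2h₁]
        have hlt : (Vlevel h 2 \ {v}).ncard < (Vlevel h 2).ncard :=
          Set.ncard_diff_singleton_lt_of_mem hv2 (Set.toFinite _)
        omega


end AuxLemmas

/-- if `N(V_1(f)) ∩ V_2(f) = ∅`, then there is a minimal function `h` with
property `P` with `f ≤ h` iff `C_{P,G}[V_2(f)] ≠ ∅`. -/
theorem stmt3 [Fintype V] (G : SimpleGraph V) (P : (V → ℕ) → Prop)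
    (hP : IsNiceRDP G P) (f : V → ℕ) (hf : ∀ v, f v ≤ 2)
    (hsep : openNbhdSet G (Vlevel f 1) ∩ Vlevel f 2 = ∅) :
    (∃ h : V → ℕ, MinimalWrt P h ∧ f ≤ h) ↔ (CSet P (Vlevel f 2)).Nonempty := by
  constructor
  · rintro ⟨h, ⟨hPh, hmin⟩, hfh⟩
    have h2 := (hP.1 h hPh).1
    have hA : Vlevel f 2 ⊆ Vlevel h 2 := by
      intro v hv
      have hfv : f v = 2 := hv
      have hfle : f v ≤ h v := hfh v
      have hb : h v ≤ 2 := h2 v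
      show h v = 2
      omega
    have hinv : ∀ w ∈ Vlevel f 2,
        ¬ privNbhd G (Vlevel h 0 ∪ Vlevel h 2) (Vlevel h 2) w ⊆ {w} := by
      intro w hw hsub
      have hw2 : w ∈ Vlevel h 2 := hA hw
      have hP' : P (h - chi {w}) := (hP.2.2 h hPh w hw2).mpr hsub
      have hle : h - chi {w} ≤ h := fun v => Nat.sub_le _ _
      have heq := hmin _ hP' hle
      have heval : (h - chi {w}) w = h w := congrFun heq w
      rw [Pi.sub_apply, chi_of_mem (mem_singleton w)] at heval
      have hhw : h w = 2 := hw2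
      omega
    exact main_aux hP (Vlevel f 2) (Vlevel h 2).ncard h hPh hA hinv le_rfl
  · rintro ⟨g, hgmin, hgV2⟩
    refine ⟨g, hgmin, ?_⟩
    intro v
    show f v ≤ g v
    have hfv := hf v
    have hcases : f v = 0 ∨ f v = 1 ∨ f v = 2 := by omega
    rcases hcases with h0 | h1 | h2
    · rw [h0]; exact Nat.zero_le _
    · by_contra hlt
      have hg0 : g v = 0 := by omega
      obtain ⟨u, hadj, hu2⟩ := (hP.1 g hgmin.1).2 v hg0
      have hu2' : u ∈ Vlevel f 2 := hgV2 ▸ (show u ∈ Vlevel g 2 from hu2)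
      have hmem : u ∈ openNbhdSet G (Vlevel f 1) ∩ Vlevel f 2 :=
        ⟨mem_iUnion₂.mpr ⟨v, h1, hadj⟩, hu2'⟩
      rw [hsep] at hmem
      exact hmem
    · have hv2 : v ∈ Vlevel g 2 := hgV2.symm ▸ (show v ∈ Vlevel f 2 from h2)
      have : g v = 2 := hv2
      omega
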